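/- Let E be a directed graph. An admissible pair (H,S) of E is reflexive if and only if R(H) − H ⊆ R(H⊥) and S = B_H. -/
import Mathlib


namespace GraphAnn

variable {V E : Type*}

/-- `u ≥ v`: there is a (possibly trivial) path from `u` to `v`. -/
def Reach (s r : E → V) : V → V → Prop :=
  Relation.ReflTransGen (fun a b => ∃ e, s e = a ∧ r e = b)

/-- The root `R(W)` of a set of vertices. -/
def Root (s r : E → V) (W : Set V) : Set V :=
  {u | ∃ v ∈ W, Reach s r u v}

def Hereditary (s r : E → V) (H : Set V) : Prop :=
  ∀ u v, u ∈ H → Reach s r u v → v ∈ H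

def IsSink (s : E → V) (v : V) : Prop := ∀ e : E, s e ≠ v

def IsInfiniteEmitter (s : E → V) (v : V) : Prop := {e : E | s e = v}.Infinite

def IsRegular (s : E → V) (v : V) : Prop := ¬ IsSink s v ∧ ¬ IsInfiniteEmitter s v

def Saturated (s r : E → V) (H : Set V) : Prop :=
  ∀ v, IsRegular s v → (∀ e : E, s e = v → r e ∈ H) → v ∈ H

/-- `V⊥ = E⁰ − R(V)`. -/
def perp (s r : E → V) (W : Set V) : Set V := {v | v ∉ Root s r W}

/-- Breaking vertices `B_H`. -/
def Breaking (s r : E → V) (H : Set V) : Set V :=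
  {v | v ∉ H ∧ IsInfiniteEmitter s v ∧
    {e : E | s e = v ∧ r e ∉ H}.Nonempty ∧ {e : E | s e = v ∧ r e ∉ H}.Finite}

/-- `(H,S)` is an admissible pair. -/
def Admissible (s r : E → V) (H S : Set V) : Prop :=
  Hereditary s r H ∧ Saturated s r H ∧ S ⊆ Breaking s r H

/-- `S⊥ = B_{H⊥} − S`. -/
def Sperp (s r : E → V) (H S : Set V) : Set V := Breaking s r (perp s r H) \ S

/-- A cycle: a closed path of positive length in which distinct edges have
distinct sources. -/
structure GCycle (s r : E → V) where
  edges : List E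
  ne : edges ≠ []
  chain : edges.Chain' (fun e f => r e = s f)
  closed : r (edges.getLast ne) = s (edges.head ne)
  srcNodup : (edges.map s).Nodup

/-- The vertex set `c⁰` of a cycle. -/
def GCycle.verts {s r : E → V} (c : GCycle s r) : Set V :=
  {v | ∃ e ∈ c.edges, s e = v}

/-- A cycle has an exit. -/
def GCycle.HasExit {s r : E → V} (c : GCycle s r) : Prop :=
  ∃ e, s e ∈ c.verts ∧ e ∉ c.edges

/-- An extreme cycle: it has an exit and every exit returns. -/
def GCycle.Extreme {s r : E → V} (c : GCycle s r) : Prop :=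
  c.HasExit ∧ ∀ v ∈ c.verts, ∀ w, Reach s r v w → ∃ u ∈ c.verts, Reach s r w u

/-- The vertex set `α⁰` of an infinite path `α`. -/
def InfPathVerts (s : E → V) (α : ℕ → E) : Set V := {v | ∃ n, s (α n) = v}

/-- Conditions (a), (b), (c): the graph is all-reflexive. -/
def AllReflexiveGraph (s r : E → V) : Prop :=
  (∀ c : GCycle s r, ¬ c.HasExit ∨ c.Extreme) ∧
  (∀ v, IsInfiniteEmitter s v → ∃ c : GCycle s r, v ∈ c.verts) ∧
  (∀ α : ℕ → E, (∀ n, r (α n) = s (α (n + 1))) →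
    {e : E | s e ∈ InfPathVerts s α ∧ r e ∉ Root s r (InfPathVerts s α)}.Finite)

/-- An admissible pair `(H,S)` is reflexive iff `R(H) − H ⊆ R(H⊥)` and
`S = B_H`. -/
theorem reflexive_iff (s r : E → V) (H S : Set V) (h : Admissible s r H S) :
    (H = perp s r (perp s r H) ∧
        S = Sperp s r (perp s r H) (Sperp s r H S)) ↔
      (Root s r H \ H ⊆ Root s r (perp s r H) ∧ S = Breaking s r H) := by
  obtain ⟨hHer, -, hSB⟩ := h
  -- H ⊆ H⊥⊥ (from heredity)
  have hHsub : ∀ v ∈ H, v ∉ Root s r (perp s r H) := by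
    rintro v hv ⟨w, hw, hreach⟩
    exact hw ⟨w, hHer v w hv hreach, Relation.ReflTransGen.refl⟩
  -- B_H and B_{H⊥} are disjoint
  have hdisj : ∀ v, v ∈ Breaking s r H → v ∉ Breaking s r (perp s r H) := by
    rintro v ⟨-, hinf, -, hfin⟩ ⟨-, -, -, hfin'⟩
    apply hinf
    have hsub : {e : E | s e = v} ⊆
        {e : E | s e = v ∧ r e ∉ H} ∪ {e : E | s e = v ∧ r e ∉ perp s r H} := by
      intro e he
      by_cases hr : r e ∈ H
      · exact Or.inr ⟨he, fun hp => hp ⟨r e, hr, Relation.ReflTransGen.refl⟩⟩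
      · exact Or.inl ⟨he, hr⟩
    exact (hfin.union hfin').subset hsub
  constructor
  · rintro ⟨hH, hS⟩
    refine ⟨?_, ?_⟩
    · intro v hv
      by_contra hvn
      have hmem : v ∈ perp s r (perp s r H) := hvn
      rw [← hH] at hmem
      exact hv.2 hmem
    · refine Set.Subset.antisymm hSB ?_
      intro v hv
      by_contra hvS
      have hv' : v ∈ Breaking s r (perp s r (perp s r H)) := by rw [← hH]; exact hv
      have hmem : v ∈ Breaking s r (perp s r H) \ S := by
        by_contra hc
        exact hvS (hS ▸ (⟨hv', hc⟩ : v ∈ Sperp s r (perp s r H) (Sperp s r H S)))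
      exact hdisj v hv hmem.1
  · rintro ⟨h1, hSB'⟩
    have hH : H = perp s r (perp s r H) := by
      ext v
      constructor
      · exact fun hv => hHsub v hv
      · intro hv
        by_contra hvH
        by_cases hroot : v ∈ Root s r H
        · exact hv (h1 ⟨hroot, hvH⟩)
        · exact hv ⟨v, hroot, Relation.ReflTransGen.refl⟩
    refine ⟨hH, ?_⟩
    unfold Sperp
    rw [← hH, hSB']
    ext v
    constructor
    · exact fun hv => ⟨hv, fun hc => hc.2 hv⟩
    · exact fun hv => hv.1

end GraphAnn
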